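/- Under the same i.i.d. two-level model, the expected population variance of the group satisfies E[σ_S²] = (K'²/(K'+1)²) Var₋ + (K'/(K'+1)²) Δ², where σ_S² = (1/(K'+1)) [ (r⁺ − μ_S)² + Σ_{j=1}^{K'} (r⁻_j − μ_S)² ]. -/

import Mathlib

open MeasureTheory ProbabilityTheory

/-- In the i.i.d. two-level model, the expected population variance of the group is E[σ_S²] = (K'²/(K'+1)²)Var₋ + (K'/(K'+1)²)Δ². -/
theorem stmt_7 {Ω : Type*} [MeasurableSpace Ω] (μ : Measure Ω) [IsProbabilityMeasure μ]
    (K' : ℕ) (hK : 1 ≤ K') (rp m Var Δ : ℝ) (rneg : Fin K' → Ω → ℝ)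
    (hmeas : ∀ j, Measurable (rneg j))
    (hiid : iIndepFun rneg μ)
    (hident : ∀ i j, IdentDistrib (rneg i) (rneg j) μ μ)
    (hint : ∀ j, Integrable (rneg j) μ)
    (hsqint : ∀ j, Integrable (fun ω => (rneg j ω) ^ 2) μ)
    (hmean : ∀ j, ∫ ω, rneg j ω ∂μ = m)
    (hvar : ∀ j, ∫ ω, (rneg j ω - m) ^ 2 ∂μ = Var)
    (hΔ : Δ = rp - m)
    (μS : Ω → ℝ)
    (hμS : μS = fun ω => (rp + ∑ j, rneg j ω) / ((K' : ℝ) + 1)) :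
    (∫ ω, ((rp - μS ω) ^ 2 + ∑ j, (rneg j ω - μS ω) ^ 2) / ((K' : ℝ) + 1) ∂μ) =
      ((K' : ℝ) ^ 2 / ((K' : ℝ) + 1) ^ 2) * Var + ((K' : ℝ) / ((K' : ℝ) + 1) ^ 2) * Δ ^ 2 := by
  have hn0 : ((K' : ℝ) + 1) ≠ 0 := by positivity
  -- second moments
  have hE2 : ∀ j, ∫ ω, (rneg j ω) ^ 2 ∂μ = Var + m ^ 2 := by
    intro j
    have h1 : (fun ω => (rneg j ω - m) ^ 2)
        = fun ω => (rneg j ω) ^ 2 - (2 * m) * rneg j ω + m ^ 2 := by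
      funext ω; ring
    have h2 := hvar j
    have ia : Integrable (fun ω => rneg j ω ^ 2 - 2 * m * rneg j ω) μ :=
      (hsqint j).sub ((hint j).const_mul _)
    have ib : Integrable (fun ω => 2 * m * rneg j ω) μ := (hint j).const_mul _
    rw [h1, integral_add ia (integrable_const _),
      integral_sub (hsqint j) ib, integral_const_mul _ _, hmean j,
      integral_const] at h2
    simp at h2
    linarith
  -- products
  have hprodint : ∀ i j, Integrable (fun ω => rneg i ω * rneg j ω) μ := by
    intro i j
    rcases eq_or_ne i j with rfl | hij
    · simpa [pow_two] using hsqint i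
    · exact (hiid.indepFun hij).integrable_mul (hint i) (hint j)
  have hprod : ∀ i j, i ≠ j → ∫ ω, rneg i ω * rneg j ω ∂μ = m ^ 2 := by
    intro i j hij
    have := (hiid.indepFun hij).integral_mul_eq_mul_integral (hint i).aestronglyMeasurable (hint j).aestronglyMeasurable
    rw [show (rneg i * rneg j) = fun ω => rneg i ω * rneg j ω from rfl] at this
    rw [this, hmean i, hmean j]; ring
  -- sum S
  set S : Ω → ℝ := fun ω => ∑ j, rneg j ω with hS
  have hSint : Integrable S μ := integrable_finset_sum _ fun j _ => hint j
  have hSmean : ∫ ω, S ω ∂μ = (K' : ℝ) * m := by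
    rw [hS]
    rw [integral_finset_sum _ fun j _ => hint j]
    simp [hmean]
  have hSsq : (fun ω => (S ω) ^ 2) = fun ω => ∑ i, ∑ j, rneg i ω * rneg j ω := by
    funext ω
    simp only [hS, pow_two, Finset.sum_mul_sum]
  have hSsqint : Integrable (fun ω => (S ω) ^ 2) μ := by
    rw [hSsq]
    exact integrable_finset_sum _ fun i _ =>
      integrable_finset_sum _ fun j _ => hprodint i j
  have hSsqmean : ∫ ω, (S ω) ^ 2 ∂μ = (K' : ℝ) * Var + (K' : ℝ) ^ 2 * m ^ 2 := by
    rw [hSsq, integral_finset_sum _ fun i _ =>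
        integrable_finset_sum _ fun j _ => hprodint i j]
    have : ∀ i : Fin K', ∫ ω, ∑ j, rneg i ω * rneg j ω ∂μ
        = Var + m ^ 2 + ((K' : ℝ) - 1) * m ^ 2 := by
      intro i
      rw [integral_finset_sum _ fun j _ => hprodint i j]
      rw [Finset.sum_eq_add_sum_sdiff_singleton_of_mem (Finset.mem_univ i)]
      have h1 : ∫ ω, rneg i ω * rneg i ω ∂μ = Var + m ^ 2 := by
        rw [← hE2 i]; congr 1; funext ω; ring
      have h2 : ∑ j ∈ Finset.univ \ {i}, ∫ ω, rneg i ω * rneg j ω ∂μ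
          = ((K' : ℝ) - 1) * m ^ 2 := by
        rw [Finset.sum_congr rfl fun j hj => hprod i j
          (fun h => by simp [h] at hj), Finset.sum_const,
          Finset.card_sdiff_of_subset (by simp), Finset.card_univ, Fintype.card_fin,
          Finset.card_singleton, nsmul_eq_mul, Nat.cast_sub hK]
        push_cast; ring
      rw [h1, h2]
    rw [Finset.sum_congr rfl fun i _ => this i]
    simp
    ring
  -- Q
  set Q : Ω → ℝ := fun ω => ∑ j, (rneg j ω) ^ 2 with hQ
  have hQint : Integrable Q μ := integrable_finset_sum _ fun j _ => hsqint j
  have hQmean : ∫ ω, Q ω ∂μ = (K' : ℝ) * (Var + m ^ 2) := by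
    rw [hQ, integral_finset_sum _ fun j _ => hsqint j]
    simp [hE2]; ring
  -- pointwise rewrite
  have key : (fun ω => ((rp - μS ω) ^ 2 + ∑ j, (rneg j ω - μS ω) ^ 2) / ((K' : ℝ) + 1))
      = fun ω => (rp ^ 2 / ((K' : ℝ) + 1) - rp ^ 2 / ((K' : ℝ) + 1) ^ 2)
        + (-2 * rp / ((K' : ℝ) + 1) ^ 2) * S ω
        + (-1 / ((K' : ℝ) + 1) ^ 2) * (S ω) ^ 2
        + (1 / ((K' : ℝ) + 1)) * Q ω := by
    funext ω
    have hsum : ∑ j, (rneg j ω - μS ω) ^ 2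
        = Q ω - 2 * μS ω * S ω + (K' : ℝ) * (μS ω) ^ 2 := by
      simp only [hQ, hS, sub_sq, Finset.sum_add_distrib, Finset.sum_sub_distrib,
        ← Finset.sum_mul, ← Finset.mul_sum, Finset.sum_const, Finset.card_univ,
        Fintype.card_fin, nsmul_eq_mul]
      ring
    rw [hsum, hμS]
    simp only
    field_simp
    ring
  rw [key]
  have i1 : Integrable (fun ω => (-2 * rp / ((K' : ℝ) + 1) ^ 2) * S ω) μ :=
    hSint.const_mul _
  have i2 : Integrable (fun ω => (-1 / ((K' : ℝ) + 1) ^ 2) * (S ω) ^ 2) μ :=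
    hSsqint.const_mul _
  have i3 : Integrable (fun ω => (1 / ((K' : ℝ) + 1)) * Q ω) μ :=
    hQint.const_mul _
  have I12 : Integrable (fun ω => (rp ^ 2 / ((K' : ℝ) + 1) - rp ^ 2 / ((K' : ℝ) + 1) ^ 2)
      + (-2 * rp / ((K' : ℝ) + 1) ^ 2) * S ω) μ := (integrable_const _).add i1
  have I123 : Integrable (fun ω => (rp ^ 2 / ((K' : ℝ) + 1) - rp ^ 2 / ((K' : ℝ) + 1) ^ 2)
      + (-2 * rp / ((K' : ℝ) + 1) ^ 2) * S ω
      + (-1 / ((K' : ℝ) + 1) ^ 2) * (S ω) ^ 2) μ := I12.add i2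
  rw [integral_add I123 i3, integral_add I12 i2, integral_add (integrable_const _) i1,
    integral_const_mul _ _, integral_const_mul _ _, integral_const_mul _ _,
    integral_const, hSmean, hSsqmean, hQmean, hΔ]
  simp only [measure_univ, probReal_univ, ENNReal.toReal_one, smul_eq_mul, one_mul]
  field_simp
  ring
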